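/- Let T̃ : [0,1] → [0,1] be twice differentiable and strictly increasing with T̃(0) = 0 and T̃(1) = 1, and suppose T̃ is S-shaped with inflection point p̄ ∈ (0,1), i.e., convex on [0, p̄] and concave on [p̄, 1]. Define p* := inf{p ∈ [0,1) : T̃′(p) ≥ (1 − T̃(p))/(1 − p)}. Then p* ∈ [0, p̄], and the convex envelope δ of T̃ on [0,1] is given by δ(p) = T̃(p) for p ≤ p*, and δ(p) = T̃(p*) + ((1 − T̃(p*))/(1 − p*))·(p − p*) for p > p*. -/

import Mathlib

open MeasureTheory Set

noncomputable section

variable {Ω : Type*} [MeasurableSpace Ω]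

/-- The cumulative distribution function `F_X(x) = P(X ≤ x)` of a random variable. -/
def cdfR (P : Measure Ω) (X : Ω → ℝ) (x : ℝ) : ℝ := (P {ω | X ω ≤ x}).toReal

/-- The left-continuous quantile function `F_X⁻¹(t) = inf {x | F_X(x) ≥ t}`. -/
def quantR (P : Measure Ω) (X : Ω → ℝ) (t : ℝ) : ℝ := sInf {x : ℝ | t ≤ cdfR P X x}

/-- A bounded (measurable) random variable. -/
def IsBddRV (X : Ω → ℝ) : Prop := Measurable X ∧ ∃ C : ℝ, ∀ ω, |X ω| ≤ C

/-- Comonotonicity of two random variables. -/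
def ComonRV (Y Z : Ω → ℝ) : Prop := ∀ ω ω' : Ω, 0 ≤ (Y ω - Y ω') * (Z ω - Z ω')

/-- `U` is uniformly distributed on `(0,1)` under `P`. -/
def UnifOn01 (P : Measure Ω) (U : Ω → ℝ) : Prop :=
  Measurable U ∧ ∀ t ∈ Icc (0:ℝ) 1, cdfR P U t = t

/-- A nonatomic measure. -/
def NonatomicM (P : Measure Ω) : Prop :=
  ∀ s : Set Ω, MeasurableSet s → P s ≠ 0 →
    ∃ t : Set Ω, MeasurableSet t ∧ t ⊆ s ∧ 0 < P t ∧ P t < P s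

/-- Expected utility. -/
def EUf (P : Measure Ω) (u : ℝ → ℝ) (X : Ω → ℝ) : ℝ := ∫ ω, u (X ω) ∂P

/-- The conjugate `T̃(t) = 1 - T(1-t)` of a probability weighting function. -/
def conjW (T : ℝ → ℝ) : ℝ → ℝ := fun t => 1 - T (1 - t)

/-- Rank-dependent utility `∫₀¹ u(F_X⁻¹(t)) Tc′(t) dt`, where `Tc` is the conjugate
probability weighting function. -/
def RDUf (P : Measure Ω) (u : ℝ → ℝ) (Tc : ℝ → ℝ) (X : Ω → ℝ) : ℝ :=
  ∫ t in Ioo (0:ℝ) 1, u (quantR P X t) * deriv Tc t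

/-- A probability weighting function: maps `[0,1]` to `[0,1]`, twice differentiable,
strictly increasing, `T(0) = 0`, `T(1) = 1`. -/
def IsPWF (T : ℝ → ℝ) : Prop :=
  (∀ t ∈ Icc (0:ℝ) 1, T t ∈ Icc (0:ℝ) 1) ∧ StrictMonoOn T (Icc (0:ℝ) 1) ∧
    (∀ t ∈ Icc (0:ℝ) 1, DifferentiableAt ℝ T t) ∧
    (∀ t ∈ Icc (0:ℝ) 1, DifferentiableAt ℝ (deriv T) t) ∧ T 0 = 0 ∧ T 1 = 1

/-- A utility function: twice differentiable, strictly concave, strictly increasing. -/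
def IsUtility (u : ℝ → ℝ) : Prop :=
  (∀ x, DifferentiableAt ℝ u x) ∧ (∀ x, DifferentiableAt ℝ (deriv u) x) ∧
    StrictConcaveOn ℝ univ u ∧ StrictMono u

/-- `d` is the convex envelope of `g` on `[0,1]`: the greatest convex function
below `g` on `[0,1]`. -/
def IsConvexEnvelope (g d : ℝ → ℝ) : Prop :=
  ConvexOn ℝ (Icc (0:ℝ) 1) d ∧ (∀ t ∈ Icc (0:ℝ) 1, d t ≤ g t) ∧
    ∀ h : ℝ → ℝ, ConvexOn ℝ (Icc (0:ℝ) 1) h → (∀ t ∈ Icc (0:ℝ) 1, h t ≤ g t) →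
      ∀ t ∈ Icc (0:ℝ) 1, h t ≤ d t

/-- Feasible allocations: bounded random variables summing a.s. to the constant `w`. -/
def AllocC (P : Measure Ω) {m : ℕ} (w : ℝ) (X : Fin m → Ω → ℝ) : Prop :=
  (∀ i, IsBddRV (X i)) ∧ ∀ᵐ ω ∂P, (∑ i, X i ω) = w

/-- A quantile function: a nondecreasing left-continuous function on `(0,1)`. -/
def IsQuantFun (f : ℝ → ℝ) : Prop :=
  MonotoneOn f (Ioo (0:ℝ) 1) ∧ ∀ t ∈ Ioo (0:ℝ) 1, ContinuousWithinAt f (Iic t) t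

/-- `I_i := (u_i′)⁻¹`, the inverse marginal utility. -/
def invMarg (u : ℝ → ℝ) : ℝ → ℝ := Function.invFun (deriv u)

end

noncomputable section

open MeasureTheory Set

/-- For a twice-differentiable, strictly increasing `T̃ : [0,1] → [0,1]`
with `T̃(0) = 0`, `T̃(1) = 1` that is S-shaped (convex on `[0, p̄]`, concave on `[p̄, 1]`),
the point `p* = inf{p ∈ [0,1) : T̃′(p) ≥ (1 − T̃(p))/(1 − p)}` lies in `[0, p̄]` and the
convex envelope of `T̃` equals `T̃` on `[0, p*]` and is the chord to `(1,1)` afterwards. -/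
theorem statement8
    (g : ℝ → ℝ)
    (hmap : ∀ t ∈ Icc (0:ℝ) 1, g t ∈ Icc (0:ℝ) 1)
    (hd1 : ∀ t ∈ Icc (0:ℝ) 1, DifferentiableAt ℝ g t)
    (hd2 : ∀ t ∈ Icc (0:ℝ) 1, DifferentiableAt ℝ (deriv g) t)
    (hmono : StrictMonoOn g (Icc (0:ℝ) 1))
    (h0 : g 0 = 0) (h1 : g 1 = 1)
    (pbar : ℝ) (hpbar : pbar ∈ Ioo (0:ℝ) 1)
    (hconv : ConvexOn ℝ (Icc (0:ℝ) pbar) g)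
    (hconc : ConcaveOn ℝ (Icc pbar 1) g)
    (pstar : ℝ)
    (hpstar : pstar = sInf {p : ℝ | p ∈ Ico (0:ℝ) 1 ∧ (1 - g p) / (1 - p) ≤ deriv g p}) :
    pstar ∈ Icc 0 pbar ∧
      IsConvexEnvelope g
        (fun p => if p ≤ pstar then g p
          else g pstar + (1 - g pstar) / (1 - pstar) * (p - pstar)) := by
  set S : Set ℝ := {p : ℝ | p ∈ Ico (0:ℝ) 1 ∧ (1 - g p) / (1 - p) ≤ deriv g p} with hS
  have hpbar01 : pbar ∈ Icc (0:ℝ) 1 := ⟨hpbar.1.le, hpbar.2.le⟩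
  have hpbarS : pbar ∈ S := by
    have hslope := hconc.slope_le_deriv (left_mem_Icc.mpr hpbar.2.le)
      (right_mem_Icc.mpr hpbar.2.le) hpbar.2 (hd1 pbar hpbar01)
    rw [slope_def_field, h1] at hslope
    exact ⟨⟨hpbar.1.le, hpbar.2⟩, hslope⟩
  have hbdd : BddBelow S := ⟨0, fun p hp => hp.1.1⟩
  have hne : S.Nonempty := ⟨pbar, hpbarS⟩
  have hp0 : 0 ≤ pstar := by
    have := le_csInf hne (fun p hp => hp.1.1)
    rwa [← hpstar] at this
  have hple : pstar ≤ pbar := by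
    have := csInf_le hbdd hpbarS
    rwa [← hpstar] at this
  have h1star : pstar < 1 := lt_of_le_of_lt hple hpbar.2
  have h1s : (1:ℝ) - pstar ≠ 0 := by linarith
  have hstar01 : pstar ∈ Icc (0:ℝ) 1 := ⟨hp0, h1star.le⟩
  have hstar0b : pstar ∈ Icc (0:ℝ) pbar := ⟨hp0, hple⟩
  set k : ℝ := (1 - g pstar) / (1 - pstar) with hkdef
  have hFcont : ContinuousAt (fun p => (1 - g p) / (1 - p) - deriv g p) pstar :=
    ContinuousAt.sub
      (ContinuousAt.div (continuousAt_const.sub (hd1 pstar hstar01).continuousAt)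
        (continuousAt_const.sub continuousAt_id) h1s)
      (hd2 pstar hstar01).continuousAt
  -- Fact (K): k ≤ deriv g pstar
  have hKey : k ≤ deriv g pstar := by
    by_contra hlt
    push_neg at hlt
    have hpos : 0 < (1 - g pstar) / (1 - pstar) - deriv g pstar := by
      rw [hkdef] at hlt; linarith
    have hev : ∀ᶠ p in nhds pstar, 0 < (1 - g p) / (1 - p) - deriv g p :=
      hFcont.eventually (eventually_gt_nhds hpos)
    obtain ⟨ε, hε, hball⟩ := Metric.eventually_nhds_iff.mp hev
    have hlb : ∀ p ∈ S, pstar + ε ≤ p := by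
      intro p hp
      by_contra hple'
      push_neg at hple'
      have hps : pstar ≤ p := by
        have := csInf_le hbdd hp; rwa [← hpstar] at this
      have hdist : dist p pstar < ε := by
        rw [Real.dist_eq, abs_of_nonneg (by linarith)]; linarith
      have := hball hdist
      have := hp.2
      linarith
    have : pstar + ε ≤ sInf S := le_csInf hne hlb
    rw [← hpstar] at this
    linarith
  -- Fact (K2): if 0 < pstar then deriv g pstar ≤ k
  have hKey2 : 0 < pstar → deriv g pstar ≤ k := by
    intro hpos
    have htend : Filter.Tendsto (fun p => (1 - g p) / (1 - p) - deriv g p)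
        (nhdsWithin pstar (Iio pstar)) (nhds ((1 - g pstar) / (1 - pstar) - deriv g pstar)) :=
      hFcont.continuousWithinAt.tendsto
    have hev : ∀ᶠ p in nhdsWithin pstar (Iio pstar),
        0 ≤ (1 - g p) / (1 - p) - deriv g p := by
      filter_upwards [Ioo_mem_nhdsLT_of_mem
        (show pstar ∈ Ioc 0 pstar from ⟨hpos, le_refl _⟩)] with p hp
      have hpnotS : p ∉ S := by
        intro hmem
        have := csInf_le hbdd hmem
        rw [← hpstar] at this
        linarith [hp.2]
      by_contra hcon
      push_neg at hcon
      exact hpnotS ⟨⟨hp.1.le, by linarith [hp.2]⟩, by linarith⟩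
    have := ge_of_tendsto htend hev
    rw [hkdef]; linarith
  -- Fact (T): tangent line below g on [0, pstar]
  have hT : ∀ t ∈ Icc (0:ℝ) pstar, g pstar + k * (t - pstar) ≤ g t := by
    intro t ht
    rcases eq_or_lt_of_le ht.2 with heq | hlt
    · rw [heq]; simp
    · have hpos : 0 < pstar := lt_of_le_of_lt ht.1 hlt
      have hkeq : k = deriv g pstar := le_antisymm hKey (hKey2 hpos)
      have hslope := hconv.slope_le_deriv ⟨ht.1, le_trans ht.2 hple⟩ hstar0b hlt
        (hd1 pstar hstar01)
      rw [slope_def_field] at hslope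
      rw [hkeq]
      have hdp : 0 < pstar - t := by linarith
      rw [div_le_iff₀ hdp] at hslope
      nlinarith
  -- deriv g t ≥ k on [pstar, pbar]
  have hderivk : ∀ t ∈ Icc pstar pbar, k ≤ deriv g t := by
    intro t ht
    have := hconv.monotoneOn_deriv (fun x hx => hd1 x ⟨hx.1, le_trans hx.2 hpbar.2.le⟩)
      hstar0b ⟨le_trans hp0 ht.1, ht.2⟩ ht.1
    linarith [hKey]
  -- line below g on [pstar, pbar]
  have hLsub : ∀ p ∈ Icc pstar pbar, g pstar + k * (p - pstar) ≤ g p := by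
    intro p hp
    set ψ : ℝ → ℝ := fun t => g t - (g pstar + k * (t - pstar)) with hψ
    have hsub : Icc pstar pbar ⊆ Icc (0:ℝ) 1 := fun x hx =>
      ⟨le_trans hp0 hx.1, le_trans hx.2 hpbar.2.le⟩
    have hψd : ∀ t ∈ Icc pstar pbar, HasDerivAt ψ (deriv g t - k) t := by
      intro t ht
      have h2 : HasDerivAt (fun t => g pstar + k * (t - pstar)) k t := by
        simpa using (((hasDerivAt_id t).sub_const pstar).const_mul k).const_add (g pstar)
      exact (hd1 t (hsub ht)).hasDerivAt.sub h2
    have hmonoψ : MonotoneOn ψ (Icc pstar pbar) := by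
      apply monotoneOn_of_deriv_nonneg (convex_Icc _ _)
      · exact fun t ht => ((hψd t ht).differentiableAt).continuousAt.continuousWithinAt
      · intro t ht
        rw [interior_Icc] at ht
        exact ((hψd t ⟨ht.1.le, ht.2.le⟩).differentiableAt).differentiableWithinAt
      · intro t ht
        rw [interior_Icc] at ht
        rw [(hψd t ⟨ht.1.le, ht.2.le⟩).deriv]
        linarith [hderivk t ⟨ht.1.le, ht.2.le⟩]
    have h0ψ : ψ pstar = 0 := by simp [hψ]
    have := hmonoψ (left_mem_Icc.mpr hple) hp hp.1
    rw [h0ψ] at this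
    simpa [hψ] using this
  -- line below g on [pstar, 1]
  have hLle : ∀ p ∈ Icc (0:ℝ) 1, pstar ≤ p → g pstar + k * (p - pstar) ≤ g p := by
    intro p hp hps
    rcases le_or_gt p pbar with hcase | hcase
    · exact hLsub p ⟨hps, hcase⟩
    · have h1b : (1:ℝ) - pbar ≠ 0 := by linarith [hpbar.2]
      set a : ℝ := (1 - p) / (1 - pbar) with ha
      set b : ℝ := (p - pbar) / (1 - pbar) with hb
      have ha0 : 0 ≤ a := div_nonneg (by linarith [hp.2]) (by linarith [hpbar.2])
      have hb0 : 0 ≤ b := div_nonneg (by linarith) (by linarith [hpbar.2])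
      have hab : a + b = 1 := by rw [ha, hb]; field_simp; ring
      have hcomb : a * pbar + b * 1 = p := by rw [ha, hb]; field_simp; ring
      have hcc := hconc.2 (left_mem_Icc.mpr hpbar.2.le) (right_mem_Icc.mpr hpbar.2.le)
        ha0 hb0 hab
      rw [smul_eq_mul, smul_eq_mul, smul_eq_mul, smul_eq_mul, hcomb, h1] at hcc
      have hLb : g pstar + k * (pbar - pstar) ≤ g pbar :=
        hLsub pbar ⟨hple, le_refl _⟩
      have hk1 : k * (1 - pstar) = 1 - g pstar := div_mul_cancel₀ _ h1s
      have ha' : a * (1 - pbar) = 1 - p := div_mul_cancel₀ _ h1b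
      have hid : a * (g pstar + k * (pbar - pstar)) + b * 1 = g pstar + k * (p - pstar) := by
        rw [ha, hb, hkdef]; field_simp; ring
      linarith [mul_le_mul_of_nonneg_left hLb ha0]
  -- convexity of the envelope candidate
  have hdconv : ConvexOn ℝ (Icc (0:ℝ) 1)
      (fun p => if p ≤ pstar then g p else g pstar + k * (p - pstar)) := by
    apply convexOn_of_slope_mono_adjacent (convex_Icc _ _)
    intro x y z hx hz hxy hyz
    have hy : y ∈ Icc (0:ℝ) 1 := ⟨le_trans hx.1 hxy.le, le_trans hyz.le hz.2⟩
    rcases le_or_gt z pstar with hzz | hzz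
    · have hyp : y ≤ pstar := le_trans hyz.le hzz
      have hxp : x ≤ pstar := le_trans hxy.le hyp
      simp only [if_pos hxp, if_pos hyp, if_pos hzz]
      exact hconv.slope_mono_adjacent ⟨hx.1, le_trans hxp hple⟩
        ⟨hz.1, le_trans hzz hple⟩ hxy hyz
    · rcases le_or_gt y pstar with hyy | hyy
      · -- x < y ≤ pstar < z
        have hxp : x ≤ pstar := le_trans hxy.le hyy
        simp only [if_pos hxp, if_pos hyy, if_neg (not_le.mpr hzz)]
        have hpos : 0 < pstar := lt_of_le_of_lt hx.1 (lt_of_lt_of_le hxy hyy)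
        have hkeq : k = deriv g pstar := le_antisymm hKey (hKey2 hpos)
        have hy0b : y ∈ Icc (0:ℝ) pbar := ⟨hy.1, le_trans hyy hple⟩
        have hmk : (g y - g x) / (y - x) ≤ k := by
          have h1' := hconv.slope_le_deriv ⟨hx.1, le_trans hxp hple⟩ hy0b hxy
            (hd1 y ⟨hy.1, le_trans (le_trans hyy hple) hpbar.2.le⟩)
          rw [slope_def_field] at h1'
          have h2' := hconv.monotoneOn_deriv
            (fun t ht => hd1 t ⟨ht.1, le_trans ht.2 hpbar.2.le⟩) hy0b hstar0b hyy
          rw [hkeq]; linarith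
        have hs2 : (g y - g x) / (y - x) * (pstar - y) ≤ g pstar - g y := by
          rcases eq_or_lt_of_le hyy with heq | hlt
          · rw [heq]; simp
          · have := hconv.slope_mono_adjacent ⟨hx.1, le_trans hxp hple⟩ hstar0b hxy hlt
            rw [div_le_div_iff₀ (by linarith) (by linarith)] at this
            rw [div_mul_eq_mul_div, div_le_iff₀ (by linarith : (0:ℝ) < y - x)]
            nlinarith
        rw [le_div_iff₀ (by linarith : (0:ℝ) < z - y)]
        have hexp : (g y - g x) / (y - x) * (z - y)
            = (g y - g x) / (y - x) * (pstar - y) + (g y - g x) / (y - x) * (z - pstar) := by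
          ring
        have hmk2 : (g y - g x) / (y - x) * (z - pstar) ≤ k * (z - pstar) :=
          mul_le_mul_of_nonneg_right hmk (by linarith)
        linarith
      · -- pstar < y < z : both on the line
        simp only [if_neg (not_le.mpr hyy), if_neg (not_le.mpr hzz)]
        have hzy : (0:ℝ) < z - y := by linarith
        have hR : (g pstar + k * (z - pstar) - (g pstar + k * (y - pstar))) / (z - y) = k := by
          rw [show g pstar + k * (z - pstar) - (g pstar + k * (y - pstar)) = k * (z - y) by ring,
            mul_div_assoc, div_self hzy.ne', mul_one]
        rw [hR]
        rcases le_or_gt x pstar with hxx | hxx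
        · rw [if_pos hxx]
          have hLx : g pstar + k * (x - pstar) ≤ g x := hT x ⟨hx.1, hxx⟩
          rw [div_le_iff₀ (by linarith : (0:ℝ) < y - x)]
          nlinarith
        · rw [if_neg (not_le.mpr hxx)]
          rw [div_le_iff₀ (by linarith : (0:ℝ) < y - x)]
          nlinarith
  have hdle : ∀ t ∈ Icc (0:ℝ) 1,
      (if t ≤ pstar then g t else g pstar + k * (t - pstar)) ≤ g t := by
    intro t ht
    rcases le_or_gt t pstar with hc | hc
    · simp [if_pos hc]
    · simp only [if_neg (not_le.mpr hc)]
      exact hLle t ht hc.le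
  have hmax : ∀ h : ℝ → ℝ, ConvexOn ℝ (Icc (0:ℝ) 1) h → (∀ t ∈ Icc (0:ℝ) 1, h t ≤ g t) →
      ∀ t ∈ Icc (0:ℝ) 1, h t ≤ (if t ≤ pstar then g t else g pstar + k * (t - pstar)) := by
    intro h hh hhle t ht
    rcases le_or_gt t pstar with hc | hc
    · simp only [if_pos hc]
      exact hhle t ht
    · simp only [if_neg (not_le.mpr hc)]
      set a : ℝ := (1 - t) / (1 - pstar) with ha
      set b : ℝ := (t - pstar) / (1 - pstar) with hb
      have ha0 : 0 ≤ a := div_nonneg (by linarith [ht.2]) (by linarith)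
      have hb0 : 0 ≤ b := div_nonneg (by linarith) (by linarith)
      have hab : a + b = 1 := by rw [ha, hb]; field_simp; ring
      have hcomb : a * pstar + b * 1 = t := by rw [ha, hb]; field_simp; ring
      have hcc := hh.2 hstar01 (right_mem_Icc.mpr zero_le_one) ha0 hb0 hab
      rw [smul_eq_mul, smul_eq_mul, smul_eq_mul, smul_eq_mul, hcomb] at hcc
      have h1' : h 1 ≤ 1 := by
        have := hhle 1 (right_mem_Icc.mpr zero_le_one); rwa [h1] at this
      have hps' : h pstar ≤ g pstar := hhle pstar hstar01
      have hbk : b * (1 - g pstar) = k * (t - pstar) := by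
        rw [hb, hkdef]; field_simp
      have hid : a * g pstar + b * 1 = g pstar + k * (t - pstar) := by
        rw [ha, hb, hkdef]; field_simp; ring
      linarith [mul_le_mul_of_nonneg_left hps' ha0, mul_le_mul_of_nonneg_left h1' hb0]
  exact ⟨⟨hp0, hple⟩, hdconv, hdle, hmax⟩

end
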